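/- Let S ⊆ ℕ be a finite p-automatic set with p-kernel of cardinality c. Then every element m of S satisfies m < p^{c-2}. -/

import Mathlib

/-- A (deterministic, complete) finite automaton over the digit alphabet `{0,...,p-1}`,
with states `Fin n`. -/
structure NatAutomaton (p : ℕ) where
  n : ℕ
  start : Fin n
  accept : Fin n → Bool
  step : Fin n → Fin p → Fin n

/-- The state reached after reading a word (list of digits, most significant first). -/
def NatAutomaton.eval {p : ℕ} (M : NatAutomaton p) (w : List (Fin p)) : Fin M.n :=
  w.foldl M.step M.start

/-- The automaton accepts a word. -/
def NatAutomaton.Accepts {p : ℕ} (M : NatAutomaton p) (w : List (Fin p)) : Prop :=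
  M.accept (M.eval w) = true

/-- The value `[w]_p` of a word of base-`p` digits, read most significant digit first. -/
def wordVal (p : ℕ) (w : List (Fin p)) : ℕ :=
  w.foldl (fun acc t => acc * p + t.val) 0

/-- A set `S ⊆ ℕ` is `p`-automatic if some finite automaton accepts exactly the words
`w` (base-`p` digit strings, most significant first) with `[w]_p ∈ S`. -/
def IsPAutomatic (p : ℕ) (S : Set ℕ) : Prop :=
  ∃ M : NatAutomaton p, ∀ w : List (Fin p), M.Accepts w ↔ wordVal p w ∈ S

/-- The `p`-kernel of a set `S ⊆ ℕ`: the family of sets `(L_i^{p^r})⁻¹(S) = {n : p^r n + i ∈ S}`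
for `r ∈ ℕ` and `0 ≤ i < p^r`. -/
def pKernel (p : ℕ) (S : Set ℕ) : Set (Set ℕ) :=
  {T : Set ℕ | ∃ r i : ℕ, i < p ^ r ∧ T = {n : ℕ | p ^ r * n + i ∈ S}}

/-- If `S ⊆ ℕ` is a finite `p`-automatic set with `p`-kernel of cardinality `c`, then
every element `m ∈ S` satisfies `m < p^(c-2)`. -/
theorem mem_lt_of_finite_pKernel_card (p : ℕ) (hp : 2 ≤ p) (S : Set ℕ) (c : ℕ)
    (hSfin : S.Finite) (hfin : (pKernel p S).Finite) (hc : (pKernel p S).ncard = c) :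
    ∀ m ∈ S, m < p ^ (c - 2) := by
  intro m hm
  have hp1 : 1 < p := hp
  have hne : hSfin.toFinset.Nonempty := ⟨m, hSfin.mem_toFinset.2 hm⟩
  set M := hSfin.toFinset.max' hne with hMdef
  have hMS : M ∈ S := hSfin.mem_toFinset.1 (hSfin.toFinset.max'_mem hne)
  have hMmax : ∀ s ∈ S, s ≤ M := fun s hs =>
    hSfin.toFinset.le_max' s (hSfin.mem_toFinset.2 hs)
  have hmM : m ≤ M := hMmax m hm
  rcases Nat.eq_zero_or_pos M with hM0 | hM0
  · have : m = 0 := by omega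
    subst this
    exact pow_pos (by omega) _
  -- main case
  set R := Nat.log p M with hRdef
  set T : ℕ → Set ℕ := fun r => {n : ℕ | p ^ r * n + M % p ^ r ∈ S} with hTdef
  have hppow : ∀ r : ℕ, 0 < p ^ r := fun r => pow_pos (by omega) r
  have hTmem : ∀ r, T r ∈ pKernel p S := fun r =>
    ⟨r, M % p ^ r, Nat.mod_lt _ (hppow r), rfl⟩
  have hdiv : ∀ r, M / p ^ r ∈ T r := by
    intro r
    show p ^ r * (M / p ^ r) + M % p ^ r ∈ S
    have h := Nat.div_add_mod M (p ^ r)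
    rw [h]
    exact hMS
  have hub : ∀ r, ∀ n ∈ T r, n ≤ M / p ^ r := by
    intro r n hn
    have h1 : p ^ r * n + M % p ^ r ≤ M := hMmax _ hn
    have h2 : p ^ r * n ≤ M := le_trans (Nat.le_add_right _ _) h1
    exact (Nat.le_div_iff_mul_le (hppow r)).2 (by rwa [mul_comm])
  have hpos : ∀ r ≤ R, 1 ≤ M / p ^ r := by
    intro r hr
    have h1 : p ^ r ≤ p ^ R := Nat.pow_le_pow_right (by omega) hr
    have h2 : p ^ R ≤ M := Nat.pow_log_le_self p (by omega)
    exact (Nat.one_le_div_iff (hppow r)).2 (by omega)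
  have hstrict : ∀ r r', r < r' → r' ≤ R → M / p ^ r' < M / p ^ r := by
    intro r r' hlt hle
    have h1 : M / p ^ r' ≤ M / p ^ (r + 1) :=
      Nat.div_le_div_left (Nat.pow_le_pow_right (by omega) (by omega)) (hppow (r + 1))
    have h2 : M / p ^ (r + 1) = M / p ^ r / p := by
      rw [pow_succ, Nat.div_div_eq_div_mul]
    have h3 : M / p ^ r / p < M / p ^ r :=
      Nat.div_lt_self (hpos r (by omega)) hp1
    omega
  have hInj : ∀ r ≤ R, ∀ r' ≤ R, T r = T r' → r = r' := by
    intro r hr r' hr' heq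
    rcases lt_trichotomy r r' with h | h | h
    · exfalso
      have h1 : M / p ^ r ∈ T r' := heq ▸ hdiv r
      have h2 := hub r' _ h1
      have := hstrict r r' h hr'
      omega
    · exact h
    · exfalso
      have h1 : M / p ^ r' ∈ T r := heq ▸ hdiv r'
      have h2 := hub r _ h1
      have := hstrict r' r h hr
      omega
  have hzero : ({0} : Set ℕ) ∈ pKernel p S := by
    refine ⟨M + 1, M, ?_, ?_⟩
    · calc M < 2 ^ (M + 1) := (Nat.lt_two_pow_self (n := M)) |>.trans
              (Nat.pow_lt_pow_right one_lt_two (by omega))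
        _ ≤ p ^ (M + 1) := Nat.pow_le_pow_left hp _
    · ext n
      simp only [Set.mem_singleton_iff, Set.mem_setOf_eq]
      constructor
      · rintro rfl; simpa using hMS
      · intro hn
        by_contra h0
        have hn1 : 1 ≤ n := by omega
        have : p ^ (M + 1) * 1 ≤ p ^ (M + 1) * n := Nat.mul_le_mul_left _ hn1
        have hle := hMmax _ hn
        have hMlt : M < p ^ (M + 1) := by
          calc M < 2 ^ M := Nat.lt_two_pow_self (n := M)
            _ ≤ p ^ M := Nat.pow_le_pow_left hp _
            _ ≤ p ^ (M + 1) := Nat.pow_le_pow_right (by omega) (by omega)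
        omega
  have hempty : (∅ : Set ℕ) ∈ pKernel p S := by
    refine ⟨M + 2, M + 1, ?_, ?_⟩
    · calc M + 1 < 2 ^ (M + 2) := by
            have := Nat.lt_two_pow_self (n := M)
            have : (2:ℕ) ^ M ≤ 2 ^ (M + 2) := Nat.pow_le_pow_right (by omega) (by omega)
            have := Nat.lt_two_pow_self (n := M + 1)
            have : (2:ℕ) ^ (M + 1) ≤ 2 ^ (M + 2) := Nat.pow_le_pow_right (by omega) (by omega)
            omega
        _ ≤ p ^ (M + 2) := Nat.pow_le_pow_left hp _
    · ext n
      simp only [Set.mem_empty_iff_false, Set.mem_setOf_eq, false_iff]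
      intro hn
      have hle := hMmax _ hn
      omega
  -- counting
  classical
  set F : Finset (Set ℕ) :=
    insert (∅ : Set ℕ) (insert ({0} : Set ℕ) ((Finset.range (R + 1)).image T)) with hFdef
  have hTne0 : ∀ r ∈ Finset.range (R + 1), T r ≠ ({0} : Set ℕ) := by
    intro r hr habs
    have h1 : M / p ^ r ∈ T r := hdiv r
    rw [habs] at h1
    have h2 := hpos r (by simpa using Nat.lt_succ_iff.1 (Finset.mem_range.1 hr))
    simp only [Set.mem_singleton_iff] at h1
    omega
  have hTneE : ∀ r, T r ≠ (∅ : Set ℕ) := by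
    intro r habs
    have h1 : M / p ^ r ∈ T r := hdiv r
    rw [habs] at h1
    exact h1
  have hcardim : ((Finset.range (R + 1)).image T).card = R + 1 := by
    rw [Finset.card_image_of_injOn, Finset.card_range]
    intro r hr r' hr' heq
    exact hInj r (by simpa using Nat.lt_succ_iff.1 (Finset.mem_range.1 hr)) r'
      (by simpa using Nat.lt_succ_iff.1 (Finset.mem_range.1 hr')) heq
  have hFcard : F.card = R + 3 := by
    rw [hFdef, Finset.card_insert_of_notMem, Finset.card_insert_of_notMem, hcardim]
    · simp only [Finset.mem_image]
      rintro ⟨r, hr, heq⟩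
      exact hTne0 r hr heq
    · simp only [Finset.mem_insert, Finset.mem_image]
      rintro (h | ⟨r, hr, heq⟩)
      · exact absurd h.symm (by simp [Set.ext_iff] : ({0} : Set ℕ) ≠ ∅)
      · exact hTneE r heq
  have hFsub : (F : Set (Set ℕ)) ⊆ pKernel p S := by
    intro x hx
    simp only [hFdef, Finset.coe_insert, Set.mem_insert_iff, Finset.coe_image,
      Set.mem_image, Finset.mem_coe] at hx
    rcases hx with rfl | rfl | ⟨r, _, rfl⟩
    · exact hempty
    · exact hzero
    · exact hTmem r
  have hle : R + 3 ≤ c := by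
    have h1 : (F : Set (Set ℕ)).ncard ≤ (pKernel p S).ncard :=
      Set.ncard_le_ncard hFsub hfin
    rw [Set.ncard_coe_finset, hFcard, hc] at h1
    exact h1
  have hMlt : M < p ^ (R + 1) := Nat.lt_pow_succ_log_self hp1 M
  have hfinal : p ^ (R + 1) ≤ p ^ (c - 2) :=
    Nat.pow_le_pow_right (by omega) (by omega)
  omega
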